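/- arXiv:2104.12082 — 4 statements merged into one kernel-verified Lean document; each statement's English description precedes it below -/
import Mathlib

section
/- Let G be an r-regular orderenergetic graph of order p and let n ≥ 1. Then the join G ∨ K̄_n of G with the empty graph on n vertices is orderenergetic if and only if n = 4p − 2r. -/
open Matrix SimpleGraph Finset

variable {V W : Type*}

/-- The adjacency matrix of a simple graph over ℝ is Hermitian. -/
lemma adjMatrix_isHermitian [Fintype V] [DecidableEq V] (G : SimpleGraph V)
    [DecidableRel G.Adj] : (G.adjMatrix ℝ).IsHermitian := by
  rw [Matrix.IsHermitian, Matrix.conjTranspose_eq_transpose_of_trivial]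
  exact G.isSymm_adjMatrix

/-- The energy of a finite simple graph: the sum of the absolute values of the
eigenvalues of its real adjacency matrix. -/
noncomputable def graphEnergy [Fintype V] [DecidableEq V] (G : SimpleGraph V) : ℝ := by
  classical
  exact ∑ i, |(adjMatrix_isHermitian G).eigenvalues i|

/-- The spectrum of a finite simple graph: the multiset of eigenvalues (with
multiplicity) of its real adjacency matrix. -/
noncomputable def graphSpectrum [Fintype V] [DecidableEq V] (G : SimpleGraph V) : Multiset ℝ := by
  classical
  exact Finset.univ.val.map (adjMatrix_isHermitian G).eigenvalues

/-- A graph is integral if every eigenvalue of its adjacency matrix is an integer. -/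
def IsIntegralGraph [Fintype V] [DecidableEq V] (G : SimpleGraph V) : Prop :=
  ∀ x ∈ graphSpectrum G, ∃ k : ℤ, x = (k : ℝ)

/-- The m-shadow graph of `G`, on vertex set `Fin m × V`: `(i,u)` and `(j,v)` are
adjacent iff `u` and `v` are adjacent in `G`. -/
def shadowGraph (m : ℕ) (G : SimpleGraph V) : SimpleGraph (Fin m × V) where
  Adj x y := G.Adj x.2 y.2
  symm := ⟨fun _ _ h => h.symm⟩
  loopless := ⟨fun _ h => G.irrefl h⟩

/-- The duplicate graph of `G`, on vertex set `V ⊕ V`: `inl a` is adjacent to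
`inr b` iff `a` and `b` are adjacent in `G`; no other adjacencies. -/
def duplicateGraph (G : SimpleGraph V) : SimpleGraph (V ⊕ V) where
  Adj x y :=
    match x, y with
    | Sum.inl a, Sum.inr b => G.Adj a b
    | Sum.inr a, Sum.inl b => G.Adj a b
    | _, _ => False
  symm := ⟨by rintro (a | a) (b | b) h <;> first | exact h.symm | exact h.elim⟩
  loopless := ⟨by rintro (a | a) h <;> exact h⟩

/-- The Kronecker (tensor) product of two simple graphs. -/
def tensorGraph (G : SimpleGraph V) (H : SimpleGraph W) : SimpleGraph (V × W) where
  Adj x y := G.Adj x.1 y.1 ∧ H.Adj x.2 y.2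
  symm := ⟨fun _ _ h => ⟨h.1.symm, h.2.symm⟩⟩
  loopless := ⟨fun _ h => G.irrefl h.1⟩

/-- The m-splitting graph of `G`, on vertex set `V ⊕ (Fin m × V)`: original
vertices keep their adjacencies, an original vertex `u` is adjacent to a copy
`(i,v)` iff `u` is adjacent to `v` in `G`, and copies are pairwise non-adjacent. -/
def splittingGraph (m : ℕ) (G : SimpleGraph V) : SimpleGraph (V ⊕ (Fin m × V)) where
  Adj x y :=
    match x, y with
    | Sum.inl u, Sum.inl v => G.Adj u v
    | Sum.inl u, Sum.inr iv => G.Adj u iv.2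
    | Sum.inr iu, Sum.inl v => G.Adj iu.2 v
    | Sum.inr _, Sum.inr _ => False
  symm := ⟨by rintro (u | iu) (v | iv) h <;> first | exact h.symm | exact h.elim⟩
  loopless := ⟨by rintro (u | iu) h <;> first | exact G.irrefl h | exact h⟩

/-- The join of two simple graphs: their disjoint union together with all edges
between the two parts. -/
def joinGraph (G : SimpleGraph V) (H : SimpleGraph W) : SimpleGraph (V ⊕ W) where
  Adj x y :=
    match x, y with
    | Sum.inl a, Sum.inl b => G.Adj a b
    | Sum.inr a, Sum.inr b => H.Adj a b
    | _, _ => True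
  symm := ⟨by rintro (a | a) (b | b) h <;> first | exact h.symm | trivial⟩
  loopless := ⟨by rintro (a | a) h <;> first | exact G.irrefl h | exact H.irrefl h⟩

/-- The superpath graph on a sequence of part sizes: independent sets `W i` of
size `a i`, where vertices in parts `i` and `j` are adjacent iff `|i - j| = 1`. -/
def superpathGraph {t : ℕ} (a : Fin t → ℕ) : SimpleGraph (Σ i : Fin t, Fin (a i)) where
  Adj x y := (x.1 : ℕ) + 1 = (y.1 : ℕ) ∨ (y.1 : ℕ) + 1 = (x.1 : ℕ)
  symm := ⟨fun _ _ h => h.symm⟩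
  loopless := ⟨fun x h => by omega⟩

set_option synthInstance.maxHeartbeats 1000000
set_option maxHeartbeats 2000000

open Polynomial in
lemma OE_charpoly_diagonal {m : Type*} [Fintype m] [DecidableEq m] (d : m → ℝ) :
    (Matrix.diagonal d).charpoly = ∏ i, (X - C (d i)) := by
  rw [Matrix.charpoly]
  have : charmatrix (Matrix.diagonal d) = Matrix.diagonal (fun i => X - C (d i)) := by
    ext i j
    by_cases h : i = j
    · subst h; simp [charmatrix_apply_eq]
    · simp [charmatrix_apply_ne _ _ _ h, Matrix.diagonal_apply_ne _ h]
  rw [this, Matrix.det_diagonal]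

open Polynomial in
lemma OE_herm_charpoly {m : Type*} [Fintype m] [DecidableEq m] (M : Matrix m m ℝ)
    (hM : M.IsHermitian) :
    M.charpoly = ∏ i, (X - C (hM.eigenvalues i)) := by
  have hspec := hM.spectral_theorem
  set U : Matrix m m ℝ := (hM.eigenvectorUnitary : Matrix m m ℝ) with hU
  have h1 : U * star U = 1 := Matrix.mem_unitaryGroup_iff.mp hM.eigenvectorUnitary.2
  have h2 : star U * U = 1 := Matrix.mem_unitaryGroup_iff'.mp hM.eigenvectorUnitary.2
  have hdiag : Matrix.diagonal ((RCLike.ofReal : ℝ → ℝ) ∘ hM.eigenvalues)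
      = Matrix.diagonal hM.eigenvalues := by
    congr 1
  rw [hdiag] at hspec
  set D := Matrix.diagonal hM.eigenvalues with hD
  have key : M.charpoly = D.charpoly := by
    unfold Matrix.charpoly
    have hcm : charmatrix M = (U.map C) * charmatrix D * ((star U).map C) := by
      have : charmatrix D = Matrix.scalar m (X : ℝ[X]) - D.map C := rfl
      rw [this]
      rw [Matrix.mul_sub, Matrix.sub_mul]
      have hsc : (U.map C) * Matrix.scalar m (X : ℝ[X]) * ((star U).map C)
          = Matrix.scalar m (X : ℝ[X]) := by
        rw [← Matrix.scalar_commute (X : ℝ[X]) (Commute.all _) (U.map C)]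
        rw [Matrix.mul_assoc, ← Matrix.map_mul, h1]
        simp
      have hmap : (U.map C) * D.map C * ((star U).map C) = M.map C := by
        rw [← Matrix.map_mul, ← Matrix.map_mul, ← (show M = U * D * star U from hspec)]
      rw [hsc, hmap]
      rfl
    rw [hcm, Matrix.det_mul, Matrix.det_mul]
    have hdet : (U.map C).det * ((star U).map C).det = 1 := by
      have e1 : (U.map C).det = C U.det := (RingHom.map_det C U).symm
      have e2 : ((star U).map C).det = C (star U).det := (RingHom.map_det C (star U)).symm
      rw [e1, e2, ← _root_.map_mul, ← Matrix.det_mul, h1]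
      simp
    calc (U.map C).det * D.charmatrix.det * ((star U).map C).det
        = (U.map C).det * ((star U).map C).det * D.charmatrix.det := by ring
      _ = D.charmatrix.det := by rw [hdet, one_mul]
  rw [key, hD, OE_charpoly_diagonal]

open Polynomial in
lemma OE_herm_roots {m : Type*} [Fintype m] [DecidableEq m] (M : Matrix m m ℝ)
    (hM : M.IsHermitian) :
    M.charpoly.roots = Finset.univ.val.map hM.eigenvalues := by
  rw [OE_herm_charpoly M hM]
  have : ∏ i, (X - C (hM.eigenvalues i))
      = ((Finset.univ.val.map hM.eigenvalues).map fun a => X - C a).prod := by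
    rw [Multiset.map_map]; rfl
  rw [this, Polynomial.roots_multiset_prod_X_sub_C]

lemma OE_herm_abs_sum {m : Type*} [Fintype m] [DecidableEq m] (M : Matrix m m ℝ)
    (hM : M.IsHermitian) :
    ∑ i, |hM.eigenvalues i| = (M.charpoly.roots.map fun x => |x|).sum := by
  rw [OE_herm_roots M hM, Multiset.map_map]
  rfl

open Polynomial in
lemma OE_charpoly_join_identity {V : Type*} [Fintype V] [DecidableEq V]
    (A : Matrix V V ℝ) (r : ℝ) (hrow : ∀ i, ∑ j, A i j = r) (n : ℕ) (hn : 1 ≤ n) :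
    (X - C r) * (fromBlocks A (Matrix.of fun _ _ => (1:ℝ)) (Matrix.of fun _ _ => (1:ℝ))
        (0 : Matrix (Fin n) (Fin n) ℝ)).charpoly
      = X ^ (n - 1) * (X ^ 2 - C r * X - C ((n : ℝ) * (Fintype.card V : ℝ))) * A.charpoly := by
  classical
  set p : ℝ := (Fintype.card V : ℝ) with hp
  set φ : ℝ[X] →+* RatFunc ℝ := (algebraMap ℝ[X] (RatFunc ℝ) : ℝ[X] →+* RatFunc ℝ) with hφdef
  have hφ : Function.Injective φ := IsFractionRing.injective _ _
  apply hφ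
  set t : RatFunc ℝ := φ X with ht
  set r' : RatFunc ℝ := φ (C r) with hr'
  have htr : t - r' ≠ 0 := by
    rw [ht, hr', ← map_sub]
    intro h
    exact X_sub_C_ne_zero r (by simpa using hφ (h.trans (map_zero φ).symm))
  have ht0 : t ≠ 0 := by
    rw [ht]
    intro h
    exact X_ne_zero (hφ (h.trans (map_zero φ).symm))
  set c : RatFunc ℝ := (t - r')⁻¹ with hc
  have hcc : c * (t - r') = 1 := inv_mul_cancel₀ htr
  set A₁ : Matrix V V (RatFunc ℝ) := (charmatrix A).map φ with hA₁
  have hdetA : A₁.det = φ A.charpoly := by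
    rw [hA₁, Matrix.charpoly, RingHom.map_det]
    rfl
  have hAne : φ A.charpoly ≠ 0 := fun h =>
    A.charpoly_monic.ne_zero (hφ (h.trans (map_zero φ).symm))
  have hAunit : IsUnit A₁.det := by rw [hdetA]; exact (hAne : _) |> Ne.isUnit
  haveI : Invertible A₁ := A₁.invertibleOfIsUnitDet hAunit
  have key : φ (fromBlocks A (Matrix.of fun _ _ => (1:ℝ)) (Matrix.of fun _ _ => (1:ℝ))
      (0 : Matrix (Fin n) (Fin n) ℝ)).charpoly
      = (fromBlocks A₁ (Matrix.of fun _ _ => (-1 : RatFunc ℝ))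
          (Matrix.of fun _ _ => (-1 : RatFunc ℝ))
          (Matrix.diagonal fun _ : Fin n => t)).det := by
    rw [Matrix.charpoly, RingHom.map_det, charmatrix_fromBlocks]
    congr 1
    show Matrix.map _ φ = _
    rw [Matrix.fromBlocks_map]
    have e12 : ((-(Matrix.of fun (_:V) (_:Fin n) => (1:ℝ)).map C).map φ)
        = (Matrix.of fun (_:V) (_:Fin n) => (-1 : RatFunc ℝ)) := by
      ext i j
      simp [Matrix.map_apply]
    have e21 : ((-(Matrix.of fun (_:Fin n) (_:V) => (1:ℝ)).map C).map φ)
        = (Matrix.of fun (_:Fin n) (_:V) => (-1 : RatFunc ℝ)) := by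
      ext i j
      simp [Matrix.map_apply]
    have e0 : (charmatrix (0 : Matrix (Fin n) (Fin n) ℝ)).map φ
        = Matrix.diagonal fun _ : Fin n => t := by
      ext i j
      by_cases h : i = j
      · subst h
        simp [charmatrix_apply_eq, Matrix.map_apply, ht]
      · simp [charmatrix_apply_ne _ _ _ h, Matrix.map_apply, Matrix.diagonal_apply_ne _ h]
    rw [e12, e21, e0]
  rw [_root_.map_mul, _root_.map_mul, _root_.map_mul, key]
  have hschur := Matrix.det_fromBlocks₁₁ A₁ (Matrix.of fun (_:V) (_:Fin n) => (-1 : RatFunc ℝ))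
    (Matrix.of fun (_:Fin n) (_:V) => (-1 : RatFunc ℝ)) (Matrix.diagonal fun _ : Fin n => t)
  rw [hschur]
  have hsolve : A₁ * (Matrix.of fun (_:V) (_:Fin n) => c)
      = Matrix.of fun (_:V) (_:Fin n) => (1 : RatFunc ℝ) := by
    ext i j
    rw [Matrix.mul_apply]
    have hsum : ∑ k, A₁ i k = t - r' := by
      have : ∑ k, charmatrix A i k = X - C r := by
        have : ∑ k, charmatrix A i k
            = ∑ k, ((Matrix.diagonal fun _ : V => (X:ℝ[X])) i k - C (A i k)) := by
          refine Finset.sum_congr rfl fun k _ => charmatrix_apply ..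
        rw [this, Finset.sum_sub_distrib, ← map_sum, hrow i]
        congr 1
        rw [Finset.sum_eq_single i]
        · simp
        · intro b _ hb; exact Matrix.diagonal_apply_ne _ (Ne.symm hb)
        · intro h; exact absurd (Finset.mem_univ i) h
      rw [hA₁]
      simp only [Matrix.map_apply]
      rw [← map_sum, this, map_sub, ← ht, ← hr']
    simp only [Matrix.of_apply]
    rw [← Finset.sum_mul, hsum, mul_comm, hcc]
  have hinv : (⅟A₁) * (Matrix.of fun (_:V) (_:Fin n) => (1 : RatFunc ℝ))
      = Matrix.of fun (_:V) (_:Fin n) => c := by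
    rw [← hsolve, ← Matrix.mul_assoc, invOf_mul_self A₁, Matrix.one_mul]
  set pK : RatFunc ℝ := φ (C p) with hpK
  have hmid : (Matrix.of fun (_:Fin n) (_:V) => (-1 : RatFunc ℝ)) * ⅟A₁
      * (Matrix.of fun (_:V) (_:Fin n) => (-1 : RatFunc ℝ))
      = Matrix.of fun (_:Fin n) (_:Fin n) => pK * c := by
    rw [Matrix.mul_assoc]
    have hneg : (Matrix.of fun (_:V) (_:Fin n) => (-1 : RatFunc ℝ))
        = -(Matrix.of fun (_:V) (_:Fin n) => (1 : RatFunc ℝ)) := by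
      ext i j; simp
    rw [hneg, Matrix.mul_neg, hinv, Matrix.mul_neg]
    ext i j
    simp only [Matrix.neg_apply, Matrix.mul_apply, Matrix.of_apply, neg_mul, one_mul, neg_neg,
      Finset.sum_const, Finset.card_univ, nsmul_eq_mul]
    rw [hpK, hp, map_natCast C, map_natCast φ]
    ring
  rw [hmid, hdetA]
  set d : RatFunc ℝ := pK * c with hd
  have hinner : (Matrix.diagonal (fun _ : Fin n => t) - Matrix.of fun _ _ => d)
      = t • (1 + Matrix.replicateCol Unit (fun _ : Fin n => -(d * t⁻¹))
          * Matrix.replicateRow Unit (fun _ : Fin n => (1 : RatFunc ℝ))) := by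
    ext i j
    by_cases h : i = j
    · subst h
      simp only [Matrix.sub_apply, Matrix.diagonal_apply_eq, Matrix.of_apply, Matrix.smul_apply,
        Matrix.add_apply, Matrix.one_apply_eq, Matrix.mul_apply, Matrix.replicateCol_apply,
        Matrix.replicateRow_apply, smul_eq_mul]
      rw [Finset.sum_const]
      simp only [Finset.card_univ, Fintype.card_unit, one_smul, neg_mul, mul_one]
      field_simp
      ring
    · simp only [Matrix.sub_apply, Matrix.diagonal_apply_ne _ h, Matrix.of_apply,
        Matrix.smul_apply, Matrix.add_apply, Matrix.one_apply_ne h, Matrix.mul_apply,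
        Matrix.replicateCol_apply, Matrix.replicateRow_apply, smul_eq_mul]
      rw [Finset.sum_const]
      simp only [Finset.card_univ, Fintype.card_unit, one_smul, neg_mul, mul_one, zero_add]
      field_simp
      ring
  have hsub : (Matrix.diagonal fun _ : Fin n => t) - (Matrix.of fun (_:Fin n) (_:Fin n) => pK * c)
      = (Matrix.diagonal (fun _ : Fin n => t) - Matrix.of fun _ _ => d) := by rw [hd]
  rw [hsub, hinner, Matrix.det_smul, Matrix.det_one_add_replicateCol_mul_replicateRow]
  have hdot : (fun _ : Fin n => (1 : RatFunc ℝ)) ⬝ᵥ (fun _ : Fin n => -(d * t⁻¹))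
      = -((n : RatFunc ℝ) * (d * t⁻¹)) := by
    simp [dotProduct, Finset.sum_const, Finset.card_univ, nsmul_eq_mul]
  rw [hdot]
  have hcard : Fintype.card (Fin n) = n := Fintype.card_fin n
  rw [hcard]
  have hrhs2 : φ (X ^ 2 - C r * X - C (↑n * p))
      = t ^ 2 - r' * t - (n : RatFunc ℝ) * pK := by
    rw [map_sub, map_sub, _root_.map_pow, _root_.map_mul, ← ht, ← hr']
    congr 1
    rw [_root_.map_mul C, _root_.map_mul φ, hpK]
    congr 1
    rw [map_natCast C, map_natCast φ]
  rw [hrhs2, _root_.map_pow, ← ht, map_sub, ← ht, ← hr']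
  have hpow : t ^ n = t ^ (n - 1) * t := by
    rw [← pow_succ]
    congr 1
    omega
  rw [hpow, hd, hc]
  field_simp
  ring

lemma OE_adjMatrix_congr [Fintype V] [DecidableEq V] (G : SimpleGraph V)
    (i1 i2 : DecidableRel G.Adj) :
    @SimpleGraph.adjMatrix ℝ V G i1 _ _ = @SimpleGraph.adjMatrix ℝ V G i2 _ _ := by
  obtain rfl := Subsingleton.elim i1 i2
  rfl

lemma OE_graphEnergy_eq [Fintype V] [DecidableEq V] (G : SimpleGraph V)
    (inst : DecidableRel G.Adj) :
    graphEnergy G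
      = (((@SimpleGraph.adjMatrix ℝ V G inst _ _).charpoly.roots).map fun x => |x|).sum := by
  unfold graphEnergy
  rw [OE_herm_abs_sum, OE_adjMatrix_congr G _ inst]

lemma OE_adjMatrix_joinGraph [Fintype V] [DecidableEq V] (G : SimpleGraph V) (n : ℕ)
    (inst : DecidableRel G.Adj)
    (inst2 : DecidableRel (joinGraph G (⊥ : SimpleGraph (Fin n))).Adj) :
    @SimpleGraph.adjMatrix ℝ _ (joinGraph G (⊥ : SimpleGraph (Fin n))) inst2 _ _
      = fromBlocks (@SimpleGraph.adjMatrix ℝ V G inst _ _) (Matrix.of fun _ _ => 1)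
          (Matrix.of fun _ _ => 1) 0 := by
  ext i j
  rcases i with a | a <;> rcases j with b | b <;>
    (rw [SimpleGraph.adjMatrix_apply]; simp [SimpleGraph.adjMatrix_apply, joinGraph, Matrix.fromBlocks])

lemma OE_adjMatrix_row_sum [Fintype V] (G : SimpleGraph V) (inst : DecidableRel G.Adj)
    (r : ℕ) (hreg : G.IsRegularOfDegree r) (i : V) :
    ∑ j, (@SimpleGraph.adjMatrix ℝ V G inst _ _) i j = (r : ℝ) := by
  have := SimpleGraph.adjMatrix_mulVec_const_apply_of_regular (α := ℝ) (a := 1) (v := i) hreg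
  simpa [Matrix.mulVec, dotProduct] using this

/-- Let `G` be an `r`-regular orderenergetic graph of order `p` and `n ≥ 1`.
Then the join `G ∨ K̄_n` is orderenergetic (i.e. its energy equals its order
`p + n`) if and only if `n = 4p - 2r`. -/
theorem joinGraph_empty_orderenergetic_iff [Fintype V] [DecidableEq V]
    (G : SimpleGraph V) [DecidableRel G.Adj] (p r n : ℕ) (hp : Fintype.card V = p)
    (hreg : G.IsRegularOfDegree r) (hord : graphEnergy G = p) (hn : 1 ≤ n) :
    graphEnergy (joinGraph G (⊥ : SimpleGraph (Fin n))) = (p + n : ℕ) ↔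
      (n : ℤ) = 4 * p - 2 * r := by
  classical
  have instJ : DecidableRel (joinGraph G (⊥ : SimpleGraph (Fin n))).Adj := Classical.decRel _
  set A := G.adjMatrix ℝ with hA
  have hrow : ∀ i, ∑ j, A i j = (r : ℝ) := OE_adjMatrix_row_sum G _ r hreg
  have hid := OE_charpoly_join_identity A (r : ℝ) hrow n hn
  rw [hp] at hid
  -- abbreviations
  set s : ℝ := Real.sqrt ((r:ℝ)^2 + 4*(n:ℝ)*(p:ℝ)) with hsdef
  have hs2 : s^2 = (r:ℝ)^2 + 4*(n:ℝ)*(p:ℝ) := Real.sq_sqrt (by positivity)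
  have hs0 : 0 ≤ s := Real.sqrt_nonneg _
  have hsr : (r:ℝ) ≤ s := by
    rw [hsdef]
    have : (r:ℝ) = Real.sqrt ((r:ℝ)^2) := by
      rw [Real.sqrt_sq (by positivity)]
    rw [this]
    apply Real.sqrt_le_sqrt
    have h1 : Real.sqrt ((r:ℝ)^2) ^ 2 = (r:ℝ)^2 := Real.sq_sqrt (by positivity)
    nlinarith [Nat.cast_nonneg (α := ℝ) n, Nat.cast_nonneg (α := ℝ) p]
  set x₁ : ℝ := ((r:ℝ) + s)/2 with hx₁
  set x₂ : ℝ := ((r:ℝ) - s)/2 with hx₂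
  have hq : (Polynomial.X ^ 2 - Polynomial.C (r:ℝ) * Polynomial.X
      - Polynomial.C ((n:ℝ)*(p:ℝ)))
      = (Polynomial.X - Polynomial.C x₁) * (Polynomial.X - Polynomial.C x₂) := by
    have h1 : x₁ + x₂ = (r:ℝ) := by rw [hx₁, hx₂]; ring
    have h2 : x₁ * x₂ = -((n:ℝ)*(p:ℝ)) := by
      have : x₁ * x₂ = ((r:ℝ)^2 - s^2)/4 := by rw [hx₁, hx₂]; ring
      rw [this, hs2]; ring
    have expand : (Polynomial.X - Polynomial.C x₁) * (Polynomial.X - Polynomial.C x₂)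
        = Polynomial.X ^ 2 - Polynomial.C (x₁ + x₂) * Polynomial.X
          + Polynomial.C (x₁ * x₂) := by
      rw [map_add, _root_.map_mul]; ring
    rw [expand, h1, h2, map_neg]
    ring
  -- the matrix of the join graph
  set B := fromBlocks A (Matrix.of fun _ _ => (1:ℝ)) (Matrix.of fun _ _ => (1:ℝ))
      (0 : Matrix (Fin n) (Fin n) ℝ) with hB
  -- roots of both sides of the identity
  have hBne : B.charpoly ≠ 0 := B.charpoly_monic.ne_zero
  have hAne : A.charpoly ≠ 0 := A.charpoly_monic.ne_zero
  have hqne : (Polynomial.X ^ 2 - Polynomial.C (r:ℝ) * Polynomial.X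
      - Polynomial.C ((n:ℝ)*(p:ℝ))) ≠ 0 := by
    rw [hq]
    exact mul_ne_zero (Polynomial.X_sub_C_ne_zero _) (Polynomial.X_sub_C_ne_zero _)
  have hXne : (Polynomial.X : Polynomial ℝ) ^ (n-1) ≠ 0 :=
    pow_ne_zero _ Polynomial.X_ne_zero
  have hroots := congrArg Polynomial.roots hid
  rw [Polynomial.roots_mul (mul_ne_zero (Polynomial.X_sub_C_ne_zero (r:ℝ)) hBne),
    Polynomial.roots_X_sub_C,
    Polynomial.roots_mul (mul_ne_zero (mul_ne_zero hXne hqne) hAne),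
    Polynomial.roots_mul (mul_ne_zero hXne hqne),
    Polynomial.roots_pow, Polynomial.roots_X, hq,
    Polynomial.roots_mul (mul_ne_zero (Polynomial.X_sub_C_ne_zero x₁)
      (Polynomial.X_sub_C_ne_zero x₂)),
    Polynomial.roots_X_sub_C, Polynomial.roots_X_sub_C] at hroots
  -- sum of absolute values
  have hsum := congrArg (fun M : Multiset ℝ => (M.map fun x => |x|).sum) hroots
  simp only [Multiset.map_add, Multiset.sum_add, Multiset.map_singleton,
    Multiset.sum_singleton, Multiset.map_nsmul, Multiset.sum_nsmul, abs_zero,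
    smul_zero, zero_add] at hsum
  -- identify the energies
  have hEB : graphEnergy (joinGraph G (⊥ : SimpleGraph (Fin n)))
      = (B.charpoly.roots.map fun x => |x|).sum := by
    rw [OE_graphEnergy_eq _ instJ, OE_adjMatrix_joinGraph G n ‹DecidableRel G.Adj› instJ, ← hB]
  have hEA : (A.charpoly.roots.map fun x => |x|).sum = (p : ℝ) := by
    rw [hA]
    exact (OE_graphEnergy_eq G _).symm.trans hord
  rw [hEA] at hsum
  have habs : |(r:ℝ)| = (r:ℝ) := abs_of_nonneg (by positivity)
  have habs1 : |x₁| = x₁ := abs_of_nonneg (by rw [hx₁]; positivity)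
  have habs2 : |x₂| = (s - (r:ℝ))/2 := by
    rw [hx₂, abs_of_nonpos (by linarith)]
    ring
  rw [habs, habs1, habs2, hx₁] at hsum
  -- the energy of the join
  have hE : graphEnergy (joinGraph G (⊥ : SimpleGraph (Fin n))) = (p:ℝ) + s - (r:ℝ) := by
    rw [hEB]
    linarith
  rw [hE]
  push_cast
  constructor
  · intro h
    have hs_eq : s = (n:ℝ) + (r:ℝ) := by linarith
    have hsq : ((n:ℝ) + (r:ℝ))^2 = (r:ℝ)^2 + 4*(n:ℝ)*(p:ℝ) := by rw [← hs_eq, hs2]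
    have hn0 : (0:ℝ) < (n:ℝ) := by exact_mod_cast hn
    have : (n:ℝ) = 4*(p:ℝ) - 2*(r:ℝ) := by
      have hkey : (n:ℝ) * ((n:ℝ) + 2*(r:ℝ) - 4*(p:ℝ)) = 0 := by nlinarith
      rcases mul_eq_zero.mp hkey with h' | h'
      · exact absurd h' (ne_of_gt hn0)
      · linarith
    exact_mod_cast this
  · intro h
    have hR : (n:ℝ) = 4*(p:ℝ) - 2*(r:ℝ) := by exact_mod_cast h
    have hs_eq : s = (n:ℝ) + (r:ℝ) := by
      have h1 : (r:ℝ)^2 + 4*(n:ℝ)*(p:ℝ) = ((n:ℝ) + (r:ℝ))^2 := by nlinarith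
      rw [hsdef, h1, Real.sqrt_sq (by positivity)]
    linarith
end

section
/- Let G₁ and G₂ be hypoenergetic graphs (of orders n₁ ≥ 1 and n₂ ≥ 1 respectively). Then their Kronecker (tensor) product G₁ × G₂ is hypoenergetic, i.e., ε(G₁ × G₂) < n₁n₂. -/
open Matrix SimpleGraph Finset

variable {V W : Type*}

namespace HypoAux

open Matrix Kronecker

variable {n : Type*} [Fintype n] [DecidableEq n] {m : Type*} [Fintype m] [DecidableEq m]

/-- The "absolute value" matrix of a Hermitian real matrix. -/
noncomputable def absM {A : Matrix n n ℝ} (hA : A.IsHermitian) : Matrix n n ℝ :=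
  (hA.eigenvectorUnitary : Matrix n n ℝ) * diagonal (fun i => |hA.eigenvalues i|) *
    star (hA.eigenvectorUnitary : Matrix n n ℝ)

lemma absM_posSemidef {A : Matrix n n ℝ} (hA : A.IsHermitian) : (absM hA).PosSemidef := by
  rw [absM, Matrix.star_eq_conjTranspose]
  exact (posSemidef_diagonal_iff.mpr fun i => abs_nonneg _).mul_mul_conjTranspose_same _

lemma conj_mul_conj {U B C : Matrix n n ℝ} (hU : star U * U = 1) :
    (U * B * star U) * (U * C * star U) = U * (B * C) * star U := by
  have : (U * B) * (star U * (U * (C * star U))) = (U * B) * (C * star U) := by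
    rw [← Matrix.mul_assoc (star U) U, hU, Matrix.one_mul]
  simp only [Matrix.mul_assoc] at this ⊢
  exact this

lemma absM_sq {A : Matrix n n ℝ} (hA : A.IsHermitian) : absM hA ^ 2 = A ^ 2 := by
  have hU : star (hA.eigenvectorUnitary : Matrix n n ℝ) *
      (hA.eigenvectorUnitary : Matrix n n ℝ) = 1 :=
    Unitary.coe_star_mul_self hA.eigenvectorUnitary
  have hspec := hA.spectral_theorem
  rw [RCLike.ofReal_real_eq_id] at hspec
  simp only [Unitary.conjStarAlgAut_apply, Unitary.coe_star] at hspec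
  rw [pow_two, pow_two, absM, conj_mul_conj hU]
  conv_rhs => rw [hspec, conj_mul_conj hU]
  rw [diagonal_mul_diagonal, diagonal_mul_diagonal]
  congr 1
  funext i
  simp [abs_mul_abs_self]

lemma trace_absM {A : Matrix n n ℝ} (hA : A.IsHermitian) :
    (absM hA).trace = ∑ i, |hA.eigenvalues i| := by
  have hU : star (hA.eigenvectorUnitary : Matrix n n ℝ) *
      (hA.eigenvectorUnitary : Matrix n n ℝ) = 1 :=
    Unitary.coe_star_mul_self hA.eigenvectorUnitary
  rw [absM, trace_mul_cycle, hU, Matrix.one_mul, trace_diagonal]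

lemma absM_congr {A B : Matrix n n ℝ} (h : A = B) (hA : A.IsHermitian) (hB : B.IsHermitian) :
    absM hA = absM hB := by subst h; rfl

lemma star_kron (U : Matrix n n ℝ) (V : Matrix m m ℝ) :
    star U ⊗ₖ star V = star (U ⊗ₖ V) := by
  rw [Matrix.star_eq_conjTranspose, Matrix.star_eq_conjTranspose, Matrix.star_eq_conjTranspose,
    Matrix.conjTranspose_eq_transpose_of_trivial, Matrix.conjTranspose_eq_transpose_of_trivial,
    Matrix.conjTranspose_eq_transpose_of_trivial]
  exact kroneckerMap_transpose _ _ _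

lemma absM_kron {A : Matrix n n ℝ} {B : Matrix m m ℝ} (hA : A.IsHermitian) (hB : B.IsHermitian)
    (hAB : (A ⊗ₖ B).IsHermitian) : absM hAB = absM hA ⊗ₖ absM hB := by
  have hpsd : (absM hA ⊗ₖ absM hB).PosSemidef := by
    have h1 : absM hA ⊗ₖ absM hB =
        ((hA.eigenvectorUnitary : Matrix n n ℝ) ⊗ₖ (hB.eigenvectorUnitary : Matrix m m ℝ)) *
          (diagonal (fun i => |hA.eigenvalues i|) ⊗ₖ diagonal (fun j => |hB.eigenvalues j|)) *
          star ((hA.eigenvectorUnitary : Matrix n n ℝ) ⊗ₖ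
            (hB.eigenvectorUnitary : Matrix m m ℝ)) := by
      rw [absM, absM, ← star_kron, ← mul_kronecker_mul, ← mul_kronecker_mul]
    rw [h1, diagonal_kronecker_diagonal, Matrix.star_eq_conjTranspose]
    exact (posSemidef_diagonal_iff.mpr fun i =>
      mul_nonneg (abs_nonneg _) (abs_nonneg _)).mul_mul_conjTranspose_same _
  have hsq : (absM hA ⊗ₖ absM hB) ^ 2 = (A ⊗ₖ B) ^ 2 := by
    calc (absM hA ⊗ₖ absM hB) ^ 2 = (absM hA ^ 2) ⊗ₖ (absM hB ^ 2) := by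
          rw [pow_two, pow_two, pow_two, mul_kronecker_mul]
      _ = (A ^ 2) ⊗ₖ (B ^ 2) := by rw [absM_sq, absM_sq]
      _ = (A ⊗ₖ B) ^ 2 := by rw [pow_two, pow_two, pow_two, mul_kronecker_mul]
  open scoped MatrixOrder in
  exact (CFC.sq_eq_sq_iff _ _ (absM_posSemidef hAB).nonneg hpsd.nonneg).mp
    ((absM_sq hAB).trans hsq.symm)

end HypoAux

open Kronecker in
/-- The Kronecker (tensor) product of two hypoenergetic graphs is hypoenergetic. -/
theorem tensorGraph_hypoenergetic [Fintype V] [DecidableEq V] [Fintype W] [DecidableEq W]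
    (G₁ : SimpleGraph V) (G₂ : SimpleGraph W) (n₁ n₂ : ℕ)
    (h₁ : Fintype.card V = n₁) (h₂ : Fintype.card W = n₂)
    (hn₁ : 1 ≤ n₁) (hn₂ : 1 ≤ n₂)
    (hyp₁ : graphEnergy G₁ < n₁) (hyp₂ : graphEnergy G₂ < n₂) :
    graphEnergy (tensorGraph G₁ G₂) < (n₁ : ℝ) * n₂ := by
  classical
  subst h₁ h₂
  have hadj : (tensorGraph G₁ G₂).adjMatrix ℝ = (G₁.adjMatrix ℝ) ⊗ₖ (G₂.adjMatrix ℝ) := by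
    ext ⟨a, b⟩ ⟨c, d⟩
    simp only [SimpleGraph.adjMatrix_apply, Matrix.kroneckerMap_apply, tensorGraph,
      ite_zero_mul_ite_zero, mul_one]
    by_cases h : G₁.Adj a c ∧ G₂.Adj b d <;> simp [h, SimpleGraph.adjMatrix]
  have hK : ((G₁.adjMatrix ℝ) ⊗ₖ (G₂.adjMatrix ℝ)).IsHermitian :=
    hadj ▸ adjMatrix_isHermitian (tensorGraph G₁ G₂)
  have e1 : graphEnergy G₁ = (HypoAux.absM (adjMatrix_isHermitian G₁)).trace := by
    unfold graphEnergy; exact (HypoAux.trace_absM _).symm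
  have e2 : graphEnergy G₂ = (HypoAux.absM (adjMatrix_isHermitian G₂)).trace := by
    unfold graphEnergy; exact (HypoAux.trace_absM _).symm
  have eT : graphEnergy (tensorGraph G₁ G₂) = graphEnergy G₁ * graphEnergy G₂ := by
    rw [e1, e2]
    unfold graphEnergy
    rw [← HypoAux.trace_absM,
      HypoAux.absM_congr hadj (adjMatrix_isHermitian (tensorGraph G₁ G₂)) hK,
      HypoAux.absM_kron (adjMatrix_isHermitian G₁) (adjMatrix_isHermitian G₂) hK,
      Matrix.trace_kronecker]
  have p1 : 0 ≤ graphEnergy G₁ := by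
    unfold graphEnergy; positivity
  have p2 : 0 ≤ graphEnergy G₂ := by
    unfold graphEnergy; positivity
  rw [eT]
  exact mul_lt_mul'' hyp₁ hyp₂ p1 p2
end

section
/- Let G be a hypoenergetic graph of order p and let m ≥ 1. Then the m-shadow graph of the duplicate graph of G, D_m(D(G)), is hypoenergetic, i.e., ε(D_m(D(G))) < 2mp. -/
open Matrix SimpleGraph Finset

variable {V W : Type*}

section EnergyAux

open Polynomial Kronecker

variable {n : Type*} [Fintype n] [DecidableEq n]

lemma my_charmatrix_conj (U A : Matrix n n ℝ) (hU : U * Uᵀ = 1) :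
    charmatrix (U * A * Uᵀ) = U.map (C : ℝ →+* ℝ[X]) * charmatrix A * Uᵀ.map C := by
  have hone : (1 : Matrix n n ℝ).map (C : ℝ →+* ℝ[X]) = 1 :=
    Matrix.map_one _ (map_zero _) (map_one _)
  have hsc : Matrix.scalar n (X : ℝ[X]) = (X : ℝ[X]) • (1 : Matrix n n ℝ[X]) := by
    rw [Matrix.scalar_apply]
    ext i j
    by_cases h : i = j <;> simp [h, Matrix.diagonal_apply_ne, Matrix.one_apply]
  rw [charmatrix, charmatrix, Matrix.mul_sub, Matrix.sub_mul]
  congr 1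
  · rw [hsc, Matrix.mul_smul, smul_mul_assoc, Matrix.mul_one, ← Matrix.map_mul, hU, hone]
  · rw [RingHom.mapMatrix_apply, RingHom.mapMatrix_apply, ← Matrix.map_mul, ← Matrix.map_mul]

lemma my_charpoly_conj (U A : Matrix n n ℝ) (hU : U * Uᵀ = 1) :
    (U * A * Uᵀ).charpoly = A.charpoly := by
  have hone : (1 : Matrix n n ℝ).map (C : ℝ →+* ℝ[X]) = 1 :=
    Matrix.map_one _ (map_zero _) (map_one _)
  have hdet : (U.map (C : ℝ →+* ℝ[X])).det * (Uᵀ.map C).det = 1 := by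
    rw [← Matrix.det_mul, ← Matrix.map_mul, hU, hone, Matrix.det_one]
  rw [Matrix.charpoly, Matrix.charpoly, my_charmatrix_conj U A hU, Matrix.det_mul,
    Matrix.det_mul]
  calc (U.map (C : ℝ →+* ℝ[X])).det * (charmatrix A).det * (Uᵀ.map C).det
      = (U.map (C : ℝ →+* ℝ[X])).det * (Uᵀ.map C).det * (charmatrix A).det := by ring
    _ = (charmatrix A).det := by rw [hdet, one_mul]

lemma my_charpoly_diagonal (d : n → ℝ) :
    (Matrix.diagonal d).charpoly = ∏ i, (X - C (d i)) := by
  have : charmatrix (Matrix.diagonal d) = Matrix.diagonal (fun i => (X : ℝ[X]) - C (d i)) := by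
    ext i j
    by_cases h : i = j
    · subst h; simp [charmatrix_apply_eq]
    · simp [charmatrix_apply_ne _ _ _ h, Matrix.diagonal_apply_ne _ h]
  rw [Matrix.charpoly, this, Matrix.det_diagonal]

lemma my_eig_roots (A : Matrix n n ℝ) (U : Matrix n n ℝ) (d : n → ℝ)
    (hU : U * Uᵀ = 1) (h : A = U * Matrix.diagonal d * Uᵀ) :
    Multiset.map d Finset.univ.val = A.charpoly.roots := by
  have h1 : A.charpoly = ∏ i, (X - C (d i)) := by
    rw [h, my_charpoly_conj _ _ hU, my_charpoly_diagonal]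
  have hmm : Multiset.map (fun i => X - C (d i)) Finset.univ.val
      = Multiset.map (fun a => X - C a) (Multiset.map d Finset.univ.val) := by
    rw [Multiset.map_map]; rfl
  rw [h1, Finset.prod_eq_multiset_prod, hmm, Polynomial.roots_multiset_prod_X_sub_C]

lemma my_unitary_mul (A : Matrix n n ℝ) (hA : A.IsHermitian) :
    (hA.eigenvectorUnitary : Matrix n n ℝ) * (hA.eigenvectorUnitary : Matrix n n ℝ)ᵀ = 1 := by
  rw [← Matrix.conjTranspose_eq_transpose_of_trivial, ← Matrix.star_eq_conjTranspose]
  exact (Matrix.mem_unitaryGroup_iff).mp (hA.eigenvectorUnitary).2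

lemma my_unitary_mul' (A : Matrix n n ℝ) (hA : A.IsHermitian) :
    (hA.eigenvectorUnitary : Matrix n n ℝ)ᵀ * (hA.eigenvectorUnitary : Matrix n n ℝ) = 1 := by
  rw [← Matrix.conjTranspose_eq_transpose_of_trivial, ← Matrix.star_eq_conjTranspose]
  exact (Matrix.mem_unitaryGroup_iff').mp (hA.eigenvectorUnitary).2

lemma my_spectral (A : Matrix n n ℝ) (hA : A.IsHermitian) :
    A = (hA.eigenvectorUnitary : Matrix n n ℝ) * Matrix.diagonal hA.eigenvalues *
      (hA.eigenvectorUnitary : Matrix n n ℝ)ᵀ := by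
  have hid : (RCLike.ofReal ∘ hA.eigenvalues : n → ℝ) = hA.eigenvalues := by
    funext i; simp [RCLike.ofReal_real_eq_id]
  conv_lhs => rw [hA.spectral_theorem, hid]
  rw [Unitary.conjStarAlgAut_apply, Matrix.star_eq_conjTranspose, Matrix.conjTranspose_eq_transpose_of_trivial]

lemma my_eig_multiset (A : Matrix n n ℝ) (hA : A.IsHermitian) (U : Matrix n n ℝ) (d : n → ℝ)
    (hU : U * Uᵀ = 1) (h : A = U * Matrix.diagonal d * Uᵀ) :
    Multiset.map hA.eigenvalues Finset.univ.val = Multiset.map d Finset.univ.val := by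
  rw [my_eig_roots A _ _ (my_unitary_mul A hA) (my_spectral A hA), my_eig_roots A U d hU h]

lemma my_sum_abs_eig (A : Matrix n n ℝ) (hA : A.IsHermitian) (U : Matrix n n ℝ) (d : n → ℝ)
    (hU : U * Uᵀ = 1) (h : A = U * Matrix.diagonal d * Uᵀ) :
    ∑ i, |hA.eigenvalues i| = ∑ i, |d i| := by
  have key := my_eig_multiset A hA U d hU h
  calc ∑ i, |hA.eigenvalues i|
      = (Multiset.map (fun x => |x|) (Multiset.map hA.eigenvalues Finset.univ.val)).sum := by
        rw [Multiset.map_map, Finset.sum_eq_multiset_sum]; rfl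
    _ = (Multiset.map (fun x => |x|) (Multiset.map d Finset.univ.val)).sum := by rw [key]
    _ = ∑ i, |d i| := by rw [Multiset.map_map, Finset.sum_eq_multiset_sum]; rfl

lemma my_trace_eq (A : Matrix n n ℝ) (U : Matrix n n ℝ) (d : n → ℝ)
    (hU' : Uᵀ * U = 1) (h : A = U * Matrix.diagonal d * Uᵀ) :
    A.trace = ∑ i, d i := by
  rw [h, Matrix.trace_mul_cycle, hU', Matrix.one_mul, Matrix.trace_diagonal]

end EnergyAux

open Kronecker

/-- If `G` is a hypoenergetic graph of order `p` and `m ≥ 1`, then the m-shadow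
graph of the duplicate graph, `D_m(D(G))`, is hypoenergetic: its energy is less
than its order `2 * m * p`. -/
theorem shadowGraph_duplicateGraph_hypoenergetic [Fintype V] [DecidableEq V]
    (G : SimpleGraph V) (p m : ℕ) (hp : Fintype.card V = p)
    (hyp : graphEnergy G < p) (hm : 1 ≤ m) :
    graphEnergy (shadowGraph m (duplicateGraph G)) < 2 * (m : ℝ) * p := by
  classical
  -- Notation for the pieces of the spectral decompositions
  set A : Matrix V V ℝ := G.adjMatrix ℝ with hAdef
  have hA : A.IsHermitian := adjMatrix_isHermitian G
  set μ : V → ℝ := hA.eigenvalues with hμdef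
  set U : Matrix V V ℝ := (hA.eigenvectorUnitary : Matrix V V ℝ) with hUdef
  have hU : U * Uᵀ = 1 := my_unitary_mul A hA
  have hAspec : A = U * Matrix.diagonal μ * Uᵀ := my_spectral A hA
  -- the √2 scaling constant
  set c : ℝ := (Real.sqrt 2)⁻¹ with hcdef
  have hc2 : c * c = 1 / 2 := by
    rw [hcdef, ← mul_inv, Real.mul_self_sqrt (by norm_num : (0:ℝ) ≤ 2)]
    norm_num
  -- the unitary diagonalizing the duplicate graph
  set F : Matrix (V ⊕ V) (V ⊕ V) ℝ := Matrix.fromBlocks U U U (-U) with hFdef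
  set Wm : Matrix (V ⊕ V) (V ⊕ V) ℝ := c • F with hWdef
  have hFF : F * Fᵀ = (2:ℝ) • (1 : Matrix (V ⊕ V) (V ⊕ V) ℝ) := by
    rw [hFdef, Matrix.fromBlocks_transpose, Matrix.fromBlocks_multiply]
    simp only [Matrix.transpose_neg, Matrix.mul_neg, Matrix.neg_mul, neg_neg, hU,
      add_neg_cancel]
    rw [← Matrix.fromBlocks_one, Matrix.fromBlocks_smul, smul_zero, two_smul]
  have hWW : Wm * Wmᵀ = 1 := by
    rw [hWdef, Matrix.transpose_smul, Matrix.smul_mul, Matrix.mul_smul, hFF, smul_smul,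
      smul_smul, hc2]
    norm_num
  -- the duplicate graph's adjacency matrix
  have hBm : (duplicateGraph G).adjMatrix ℝ = Matrix.fromBlocks 0 A A 0 := by
    ext u v
    cases u <;> cases v <;>
      simp [duplicateGraph, SimpleGraph.adjMatrix, Matrix.of_apply, hAdef] <;> congr
  have hFDF : F * Matrix.fromBlocks (Matrix.diagonal μ) 0 0 (-(Matrix.diagonal μ)) * Fᵀ
      = Matrix.fromBlocks 0 (A + A) (A + A) 0 := by
    rw [hFdef, Matrix.fromBlocks_transpose, Matrix.fromBlocks_multiply,
      Matrix.fromBlocks_multiply]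
    simp only [Matrix.mul_zero, Matrix.zero_mul, Matrix.mul_neg, Matrix.neg_mul,
      Matrix.add_mul, Matrix.mul_add, neg_neg, add_zero, zero_add, neg_zero,
      Matrix.transpose_neg, add_neg_cancel]
    rw [← hAspec]
  have h2A : (1/2 : ℝ) • (A + A) = A := by module
  have hBspec : (duplicateGraph G).adjMatrix ℝ
      = Wm * Matrix.diagonal (Sum.elim μ fun i => -μ i) * Wmᵀ := by
    have hDneg : Matrix.diagonal (fun i : V => -μ i) = -(Matrix.diagonal μ) := by
      rw [← Matrix.diagonal_neg]
    rw [← Matrix.fromBlocks_diagonal, hDneg, hWdef, Matrix.transpose_smul, Matrix.smul_mul,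
      Matrix.smul_mul, Matrix.mul_smul, smul_smul, hc2, hFDF, hBm,
      Matrix.fromBlocks_smul, smul_zero, h2A]
  -- the all-ones matrix and its spectral data
  set J : Matrix (Fin m) (Fin m) ℝ := Matrix.of (fun _ _ => (1:ℝ)) with hJdef
  have hKJ : J = (Matrix.of (fun (_ : Unit) (_ : Fin m) => (1:ℝ)))ᴴ *
      Matrix.of (fun (_ : Unit) (_ : Fin m) => (1:ℝ)) := by
    ext i j
    simp [hJdef, Matrix.mul_apply]
  have hJpsd : J.PosSemidef := by
    rw [hKJ]; exact Matrix.posSemidef_conjTranspose_mul_self _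
  have hJ : J.IsHermitian := hJpsd.1
  set ν : Fin m → ℝ := hJ.eigenvalues with hνdef
  set P : Matrix (Fin m) (Fin m) ℝ := (hJ.eigenvectorUnitary : Matrix (Fin m) (Fin m) ℝ)
    with hPdef
  have hP : P * Pᵀ = 1 := my_unitary_mul J hJ
  have hP' : Pᵀ * P = 1 := my_unitary_mul' J hJ
  have hJspec : J = P * Matrix.diagonal ν * Pᵀ := my_spectral J hJ
  have hν0 : ∀ i, 0 ≤ ν i := fun i => hJpsd.eigenvalues_nonneg i
  have hνtr : ∑ i, ν i = (m : ℝ) := by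
    rw [← my_trace_eq J P ν hP' hJspec]
    simp [hJdef, Matrix.trace, Matrix.diag]
  have hνabs : ∑ i, |ν i| = (m : ℝ) := by
    rw [Finset.sum_congr rfl fun i _ => abs_of_nonneg (hν0 i), hνtr]
  -- the shadow graph's adjacency matrix as a Kronecker product
  have hMk : (shadowGraph m (duplicateGraph G)).adjMatrix ℝ
      = J ⊗ₖ ((duplicateGraph G).adjMatrix ℝ) := by
    ext x y
    obtain ⟨i, u⟩ := x
    obtain ⟨j, v⟩ := y
    simp [shadowGraph, SimpleGraph.adjMatrix, Matrix.of_apply, Matrix.kroneckerMap_apply, hJdef]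
    congr
  have hΩ : (P ⊗ₖ Wm) * (P ⊗ₖ Wm)ᵀ = 1 := by
    rw [← Matrix.kroneckerMap_transpose, ← Matrix.mul_kronecker_mul, hP, hWW,
      Matrix.one_kronecker_one]
  have hMspec : (shadowGraph m (duplicateGraph G)).adjMatrix ℝ
      = (P ⊗ₖ Wm) * Matrix.diagonal
          (fun x : Fin m × (V ⊕ V) => ν x.1 * (Sum.elim μ fun i => -μ i) x.2) *
        (P ⊗ₖ Wm)ᵀ := by
    rw [hMk, hJspec, hBspec, Matrix.mul_kronecker_mul, Matrix.mul_kronecker_mul,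
      Matrix.diagonal_kronecker_diagonal, Matrix.kroneckerMap_transpose]
  -- put everything together
  have key := my_sum_abs_eig _ (adjMatrix_isHermitian (shadowGraph m (duplicateGraph G)))
    _ _ hΩ hMspec
  have energy_eq : graphEnergy (shadowGraph m (duplicateGraph G))
      = ∑ x : Fin m × (V ⊕ V),
          |ν x.1 * (Sum.elim μ fun i => -μ i) x.2| := by
    rw [← key]
    rfl
  have hyp' : ∑ i, |μ i| < (p : ℝ) := hyp
  have hsplit : ∑ x : Fin m × (V ⊕ V), |ν x.1 * (Sum.elim μ fun i => -μ i) x.2|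
      = (∑ i, |ν i|) * (∑ u : V ⊕ V, |(Sum.elim μ fun i => -μ i) u|) := by
    rw [Fintype.sum_prod_type, Finset.sum_mul_sum]
    exact Finset.sum_congr rfl fun i _ => Finset.sum_congr rfl fun u _ => abs_mul _ _
  have hsum2 : ∑ u : V ⊕ V, |(Sum.elim μ fun i => -μ i) u|
      = (∑ i, |μ i|) + (∑ i, |μ i|) := by
    rw [Fintype.sum_sum_type]
    simp [abs_neg]
  rw [energy_eq, hsplit, hνabs, hsum2]
  have hS0 : 0 ≤ ∑ i, |μ i| := Finset.sum_nonneg fun i _ => abs_nonneg _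
  have hm' : (1 : ℝ) ≤ (m : ℝ) := by exact_mod_cast hm
  nlinarith [hyp', hS0, hm']
end

section
/- Let G be a graph and m ≥ 0. Then G is integral if and only if its m-duplicate graph Dᵐ(G) is integral. -/
open Matrix SimpleGraph Finset

variable {V W : Type*}

/-- The vertex type of the m-fold duplicate graph. -/
def iterDupVertex (V : Type*) (m : ℕ) : Type _ :=
  Nat.rec V (fun _ T => T ⊕ T) m

instance instFintypeIterDupVertex {V : Type*} [Fintype V] : ∀ m, Fintype (iterDupVertex V m)
  | 0 => inferInstanceAs (Fintype V)
  | m + 1 =>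
    letI := instFintypeIterDupVertex (V := V) m
    inferInstanceAs (Fintype (iterDupVertex V m ⊕ iterDupVertex V m))

instance instDecidableEqIterDupVertex {V : Type*} [DecidableEq V] :
    ∀ m, DecidableEq (iterDupVertex V m)
  | 0 => inferInstanceAs (DecidableEq V)
  | m + 1 =>
    letI := instDecidableEqIterDupVertex (V := V) m
    inferInstanceAs (DecidableEq (iterDupVertex V m ⊕ iterDupVertex V m))

/-- The m-duplicate graph: `D⁰(G) = G` and `Dᵐ⁺¹(G) = D(Dᵐ(G))`. -/
def iterDup (G : SimpleGraph V) : ∀ m, SimpleGraph (iterDupVertex V m)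
  | 0 => G
  | m + 1 => duplicateGraph (iterDup G m)


section Aux

open Matrix

lemma mem_spectrum_iff_exists_mulVec {n : Type*} [Fintype n] [DecidableEq n]
    (M : Matrix n n ℝ) (μ : ℝ) :
    μ ∈ spectrum ℝ M ↔ ∃ v : n → ℝ, v ≠ 0 ∧ M *ᵥ v = μ • v := by
  rw [spectrum.mem_iff, Matrix.isUnit_iff_isUnit_det, isUnit_iff_ne_zero, not_not,
    ← Matrix.exists_mulVec_eq_zero_iff]
  have halg : ∀ v : n → ℝ, (algebraMap ℝ (Matrix n n ℝ)) μ *ᵥ v = μ • v := fun v => by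
    simp [Algebra.algebraMap_eq_smul_one, Matrix.smul_mulVec, Matrix.one_mulVec]
  constructor
  · rintro ⟨v, hv, h⟩
    refine ⟨v, hv, ?_⟩
    rw [Matrix.sub_mulVec, sub_eq_zero] at h
    rw [← h, halg]
  · rintro ⟨v, hv, h⟩
    refine ⟨v, hv, ?_⟩
    rw [Matrix.sub_mulVec, sub_eq_zero, h, halg]

instance decidableRelDuplicate (G : SimpleGraph V) [h : DecidableRel G.Adj] :
    DecidableRel (duplicateGraph G).Adj
  | Sum.inl _, Sum.inl _ => isFalse fun hf => hf
  | Sum.inl a, Sum.inr b => h a b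
  | Sum.inr a, Sum.inl b => h a b
  | Sum.inr _, Sum.inr _ => isFalse fun hf => hf

@[simp] lemma duplicateGraph_adj_ll (G : SimpleGraph V) (a b : V) :
    (duplicateGraph G).Adj (Sum.inl a) (Sum.inl b) ↔ False := Iff.rfl

@[simp] lemma duplicateGraph_adj_lr (G : SimpleGraph V) (a b : V) :
    (duplicateGraph G).Adj (Sum.inl a) (Sum.inr b) ↔ G.Adj a b := Iff.rfl

@[simp] lemma duplicateGraph_adj_rl (G : SimpleGraph V) (a b : V) :
    (duplicateGraph G).Adj (Sum.inr a) (Sum.inl b) ↔ G.Adj a b := Iff.rfl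

@[simp] lemma duplicateGraph_adj_rr (G : SimpleGraph V) (a b : V) :
    (duplicateGraph G).Adj (Sum.inr a) (Sum.inr b) ↔ False := Iff.rfl

lemma subsingleton_decidableRel (G : SimpleGraph V) :
    Subsingleton (DecidableRel G.Adj) :=
  ⟨fun _ _ => funext fun _ => funext fun _ => Subsingleton.elim _ _⟩

lemma adjMatrix_inst_eq [Fintype V] [DecidableEq V] (G : SimpleGraph V)
    (d1 d2 : DecidableRel G.Adj) :
    @SimpleGraph.adjMatrix ℝ V G d1 _ _ = @SimpleGraph.adjMatrix ℝ V G d2 _ _ := by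
  haveI := subsingleton_decidableRel G
  rw [Subsingleton.elim d1 d2]

lemma mem_map_eigenvalues {n : Type*} [Fintype n] [DecidableEq n] {M : Matrix n n ℝ}
    (hM : M.IsHermitian) {x : ℝ} :
    x ∈ Multiset.map hM.eigenvalues Finset.univ.val ↔ x ∈ spectrum ℝ M := by
  rw [hM.spectrum_real_eq_range_eigenvalues]
  simp [Multiset.mem_map, eq_comm]

lemma mem_graphSpectrum_iff [Fintype V] [DecidableEq V] (G : SimpleGraph V)
    [inst : DecidableRel G.Adj] {x : ℝ} :
    x ∈ graphSpectrum G ↔ x ∈ spectrum ℝ (G.adjMatrix ℝ) := by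
  unfold graphSpectrum
  rw [mem_map_eigenvalues, adjMatrix_inst_eq G _ inst]

lemma isIntegralGraph_iff_spectrum [Fintype V] [DecidableEq V] (G : SimpleGraph V)
    [DecidableRel G.Adj] :
    IsIntegralGraph G ↔ ∀ x ∈ spectrum ℝ (G.adjMatrix ℝ), ∃ k : ℤ, x = (k : ℝ) := by
  unfold IsIntegralGraph
  exact forall_congr' fun x => imp_congr_left (mem_graphSpectrum_iff G)

lemma duplicate_mulVec_inl [Fintype V] [DecidableEq V] (G : SimpleGraph V)
    [DecidableRel G.Adj] (v : V ⊕ V → ℝ) (a : V) :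
    ((duplicateGraph G).adjMatrix ℝ *ᵥ v) (Sum.inl a)
      = (G.adjMatrix ℝ *ᵥ fun b => v (Sum.inr b)) a := by
  simp [Matrix.mulVec, dotProduct, Fintype.sum_sum_type]

lemma duplicate_mulVec_inr [Fintype V] [DecidableEq V] (G : SimpleGraph V)
    [DecidableRel G.Adj] (v : V ⊕ V → ℝ) (a : V) :
    ((duplicateGraph G).adjMatrix ℝ *ᵥ v) (Sum.inr a)
      = (G.adjMatrix ℝ *ᵥ fun b => v (Sum.inl b)) a := by
  simp [Matrix.mulVec, dotProduct, Fintype.sum_sum_type]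

lemma spectrum_duplicate [Fintype V] [DecidableEq V] (G : SimpleGraph V)
    [DecidableRel G.Adj] (μ : ℝ) :
    μ ∈ spectrum ℝ ((duplicateGraph G).adjMatrix ℝ) ↔
      μ ∈ spectrum ℝ (G.adjMatrix ℝ) ∨ -μ ∈ spectrum ℝ (G.adjMatrix ℝ) := by
  rw [mem_spectrum_iff_exists_mulVec, mem_spectrum_iff_exists_mulVec,
    mem_spectrum_iff_exists_mulVec]
  constructor
  · rintro ⟨v, hv, hev⟩
    set x : V → ℝ := fun b => v (Sum.inl b) with hx
    set y : V → ℝ := fun b => v (Sum.inr b) with hy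
    have h1 : G.adjMatrix ℝ *ᵥ y = μ • x := by
      funext a
      have := congrFun hev (Sum.inl a)
      rw [duplicate_mulVec_inl] at this
      exact this
    have h2 : G.adjMatrix ℝ *ᵥ x = μ • y := by
      funext a
      have := congrFun hev (Sum.inr a)
      rw [duplicate_mulVec_inr] at this
      exact this
    by_cases hxy : x + y = 0
    · right
      have hyx : y = -x := by
        have := hxy
        rw [add_eq_zero_iff_eq_neg] at this
        rw [this]
        simp
      refine ⟨x, ?_, ?_⟩
      · intro hx0
        apply hv
        funext z
        cases z with
        | inl a => exact congrFun hx0 a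
        | inr a =>
          have : y a = 0 := by rw [hyx]; simp [congrFun hx0 a]
          exact this
      · rw [h2, hyx]
        funext a
        simp
    · left
      refine ⟨x + y, hxy, ?_⟩
      rw [Matrix.mulVec_add, h1, h2, smul_add]
      abel
  · rintro (⟨v, hv, hev⟩ | ⟨v, hv, hev⟩)
    · refine ⟨Sum.elim v v, ?_, ?_⟩
      · intro h0
        exact hv (funext fun a => congrFun h0 (Sum.inl a))
      · funext z
        cases z with
        | inl a =>
          rw [duplicate_mulVec_inl]
          simpa using congrFun hev a
        | inr a =>
          rw [duplicate_mulVec_inr]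
          simpa using congrFun hev a
    · refine ⟨Sum.elim v (-v), ?_, ?_⟩
      · intro h0
        exact hv (funext fun a => congrFun h0 (Sum.inl a))
      · funext z
        cases z with
        | inl a =>
          rw [duplicate_mulVec_inl]
          have h1 : (fun b => Sum.elim v (-v) (Sum.inr b)) = -v := rfl
          rw [h1, Matrix.mulVec_neg, hev]
          simp
        | inr a =>
          rw [duplicate_mulVec_inr]
          have h1 : (fun b => Sum.elim v (-v) (Sum.inl b)) = v := rfl
          rw [h1, hev]
          simp
  
lemma isIntegralGraph_duplicate_iff [Fintype V] [DecidableEq V] (G : SimpleGraph V)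
    [DecidableRel G.Adj] :
    IsIntegralGraph G ↔ IsIntegralGraph (duplicateGraph G) := by
  rw [isIntegralGraph_iff_spectrum, isIntegralGraph_iff_spectrum]
  constructor
  · intro h μ hμ
    rcases (spectrum_duplicate G μ).mp hμ with h1 | h1
    · exact h μ h1
    · obtain ⟨k, hk⟩ := h _ h1
      exact ⟨-k, by push_cast; linarith⟩
  · intro h μ hμ
    exact h μ ((spectrum_duplicate G μ).mpr (Or.inl hμ))

end Aux
/-- A graph `G` is integral if and only if its m-duplicate graph `Dᵐ(G)` is
integral. -/
theorem isIntegralGraph_iterDup_iff [Fintype V] [DecidableEq V]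
    (G : SimpleGraph V) (m : ℕ) :
    IsIntegralGraph G ↔ IsIntegralGraph (iterDup G m) := by
  classical
  induction m with
  | zero => exact Iff.rfl
  | succ m ih =>
    exact ih.trans (isIntegralGraph_duplicate_iff (iterDup G m))
end
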